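/- Let L be a levellised n-lattice with dep(n−1) = k, and A_n,…,A_{n+m−1} ⊆ L \ {0} satisfying the conditions so that L̃ = L_{A_n,…,A_{n+m−1}} is a levellised (n+m)-lattice. Then L̃ is graded if and only if L is graded and ⋃_{i=n}^{n+m−1} A_i = lev_k(L). -/

import Mathlib

namespace PaperLattice

variable {N : ℕ}

/-- Depth: one less than the maximum length of a chain from `t` down to `a` w.r.t. `le`. -/
noncomputable def dep (le : Fin N → Fin N → Prop) (t a : Fin N) : ℕ :=
  sSup {k | ∃ l : List (Fin N), List.Chain' (fun x y => le y x ∧ y ≠ x) l ∧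
    l.head? = some t ∧ l.getLast? = some a ∧ l.length = k + 1}

/-- The `d`-th level: elements of depth `d`. -/
noncomputable def lev (le : Fin N → Fin N → Prop) (t : Fin N) (d : ℕ) : Set (Fin N) :=
  {a | dep le t a = d}

/-- A labelled poset is levellised if depth is monotone in the nonzero labels. -/
def Levellised (le : Fin N → Fin N → Prop) (t : Fin N) : Prop :=
  ∀ i j : Fin N, 0 < (i : ℕ) → (i : ℕ) ≤ (j : ℕ) → dep le t i ≤ dep le t j

def lt' (le : Fin N → Fin N → Prop) (a b : Fin N) : Prop := le a b ∧ a ≠ b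

/-- `b` covers `a`. -/
def CovByRel (le : Fin N → Fin N → Prop) (a b : Fin N) : Prop :=
  lt' le a b ∧ ∀ x, lt' le a x → lt' le x b → False

/-- The covering set of `a`. -/
def cov (le : Fin N → Fin N → Prop) (a : Fin N) : Set (Fin N) := {b | CovByRel le a b}

/-- The up-set of `A`. -/
def upset (le : Fin N → Fin N → Prop) (A : Set (Fin N)) : Set (Fin N) :=
  {x | ∃ a ∈ A, le a x}

def AntichainRel (le : Fin N → Fin N → Prop) (A : Set (Fin N)) : Prop :=
  ∀ a ∈ A, ∀ b ∈ A, a ≠ b → ¬ le a b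

/-- Binary weight of a set of labels. -/
noncomputable def wt (A : Set (Fin N)) : ℕ :=
  ∑ j : Fin N, A.indicator (fun j => 2 ^ (j : ℕ)) j

/-- `z` is a bottom and `o` a top for `le`. -/
def Bounds (le : Fin N → Fin N → Prop) (z o : Fin N) : Prop :=
  (∀ a, le z a) ∧ (∀ a, le a o)

/-- The order obtained from `le` by adding `m` new atoms, the `i`-th having covering set `A i`. -/
def extLe {n m : ℕ} (le : Fin n → Fin n → Prop) (A : Fin m → Set (Fin n)) :
    Fin (n + m) → Fin (n + m) → Prop := fun x y =>
  if hx : (x : ℕ) < n then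
    if hy : (y : ℕ) < n then le ⟨x, hx⟩ ⟨y, hy⟩
    else (x : ℕ) = 0
  else
    if hy : (y : ℕ) < n then
      (⟨y, hy⟩ : Fin n) ∈ upset le (A ⟨(x : ℕ) - n, by have := x.isLt; omega⟩)
    else x = y

/-- The relabelled order `π(L)`. -/
def permLe {n : ℕ} (π : Equiv.Perm (Fin n)) (le : Fin n → Fin n → Prop) :
    Fin n → Fin n → Prop := fun a b => le (π.symm a) (π.symm b)


/-- `A` is a lattice-antichain for `L` (with bottom `z`). -/
def IsLatticeAntichain {n : ℕ} (L : Lattice (Fin n)) (z : Fin n) (A : Set (Fin n)) : Prop :=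
  A.Nonempty ∧ (∀ a ∈ A, a ≠ z) ∧ AntichainRel L.le A ∧
    ∀ a ∈ upset L.le A, ∀ b ∈ upset L.le A,
      L.inf a b = z ∨ L.inf a b ∈ upset L.le A

-- general chain lemmas
def cset (le : Fin N → Fin N → Prop) (t a : Fin N) : Set ℕ :=
  {k | ∃ l : List (Fin N), List.Chain' (fun x y => le y x ∧ y ≠ x) l ∧
    l.head? = some t ∧ l.getLast? = some a ∧ l.length = k + 1}

lemma dep_eq (le : Fin N → Fin N → Prop) (t a : Fin N) : dep le t a = sSup (cset le t a) := rfl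

section General
variable {r : Fin N → Fin N → Prop} (htr : ∀ x y z, r x y → r y z → r x z)
  (has : ∀ x y, r x y → r y x → x = y)
include htr has
set_option linter.unusedSectionVars false

lemma chain_nodup {l : List (Fin N)} (hc : List.Chain' (fun x y => r y x ∧ y ≠ x) l) :
    l.Nodup := by
  haveI : IsTrans (Fin N) (fun x y => r y x ∧ y ≠ x) := by
    constructor
    rintro a b c ⟨h1, h2⟩ ⟨h3, h4⟩
    refine ⟨htr _ _ _ h3 h1, fun hcc => h4 ?_⟩
    subst hcc
    exact has _ _ h3 h1
  rw [List.Chain', List.isChain_iff_pairwise] at hc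
  exact hc.imp (fun h => Ne.symm h.2)

lemma cset_bdd (t a : Fin N) : BddAbove (cset r t a) := by
  refine ⟨N, fun j hj => ?_⟩
  obtain ⟨l, hc, -, -, hl⟩ := hj
  have := (chain_nodup htr has hc).length_le_card
  simp only [Fintype.card_fin] at this
  omega

lemma cset_mem_sSup {t a : Fin N} (hne : (cset r t a).Nonempty) :
    sSup (cset r t a) ∈ cset r t a :=
  Nat.sSup_mem hne (cset_bdd htr has t a)

omit htr has in
lemma cset_nonempty_of_top {t a : Fin N} (hat : r a t) : (cset r t a).Nonempty := by
  by_cases h : a = t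
  · exact ⟨0, [t], by simp [List.Chain'], by simp, by simp [h], by simp⟩
  · exact ⟨1, [t, a], by simp [List.Chain', hat, h], by simp, by simp, by simp⟩

omit htr has in
lemma cset_append {t a b : Fin N} {j : ℕ} (hj : j ∈ cset r t b) (hab : r a b) (hne : a ≠ b) :
    j + 1 ∈ cset r t a := by
  obtain ⟨l, hc, hh, hl, hlen⟩ := hj
  have hlne : l ≠ [] := by rintro rfl; simp at hlen
  refine ⟨l ++ [a], ?_, ?_, ?_, ?_⟩
  · refine List.IsChain.append hc (List.isChain_singleton a) ?_
    intro x hx y hy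
    simp only [List.head?_cons, Option.mem_def, Option.some.injEq] at hy
    rw [hl] at hx
    simp only [Option.mem_def, Option.some.injEq] at hx
    subst hx; subst hy
    exact ⟨hab, hne⟩
  · rw [List.head?_append, hh]; rfl
  · simp
  · simp [hlen]

omit htr has in
lemma cset_drop {t a : Fin N} {j : ℕ} (hj : j + 1 ∈ cset r t a) :
    ∃ b, r a b ∧ a ≠ b ∧ j ∈ cset r t b := by
  obtain ⟨l, hc, hh, hl, hlen⟩ := hj
  have hleq : l.dropLast ++ [a] = l := List.dropLast_append_getLast? a hl
  have hdne : l.dropLast ≠ [] := by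
    have : l.dropLast.length = j + 1 := by
      have := List.length_dropLast (xs := l); omega
    intro h; rw [h] at this; simp at this
  obtain ⟨b, hb⟩ : ∃ b, l.dropLast.getLast? = some b := by
    cases h : l.dropLast.getLast? with
    | none => exact absurd (List.getLast?_eq_none_iff.mp h) hdne
    | some b => exact ⟨b, rfl⟩
  rw [← hleq] at hc hh
  obtain ⟨hc1, hc2, hc3⟩ := List.isChain_append.mp hc
  have hrel := hc3 b (by rw [hb]; rfl) a rfl
  refine ⟨b, hrel.1, hrel.2, l.dropLast, hc1, ?_, hb, by have := List.length_dropLast (xs := l); omega⟩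
  rwa [List.head?_append_of_ne_nil _ hdne] at hh
end General


lemma h0n {n : ℕ} (hn : 2 ≤ n) : 0 < n := by omega
lemma h1n {n : ℕ} (hn : 2 ≤ n) : 1 < n := by omega
lemma hn1n {n : ℕ} (hn : 2 ≤ n) : n - 1 < n := by omega
lemma h0nm {n m : ℕ} (hn : 2 ≤ n) : 0 < n + m := by omega
lemma h1nm {n m : ℕ} (hn : 2 ≤ n) : 1 < n + m := by omega
lemma hnnm {n m : ℕ} (hm : 1 ≤ m) : n < n + m := by omega
lemma hsubm {n m : ℕ} {c : Fin (n+m)} (hcn : ¬ (c:ℕ) < n) : (c:ℕ) - n < m := by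
  have := c.isLt; omega

section Spec
set_option linter.unusedSectionVars false
variable {n m : ℕ} (L : Lattice (Fin n)) (A : Fin m → Set (Fin n))

lemma extLe_oo {x y : Fin (n+m)} (hx : (x:ℕ) < n) (hy : (y:ℕ) < n) :
    extLe L.le A x y ↔ L.le ⟨x, hx⟩ ⟨y, hy⟩ := by simp [extLe, hx, hy]

lemma extLe_on {x y : Fin (n+m)} (hx : (x:ℕ) < n) (hy : ¬ (y:ℕ) < n) :
    extLe L.le A x y ↔ (x:ℕ) = 0 := by simp [extLe, hx, hy]

lemma extLe_no {x y : Fin (n+m)} (hx : ¬ (x:ℕ) < n) (hy : (y:ℕ) < n) :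
    extLe L.le A x y ↔
      (⟨y, hy⟩ : Fin n) ∈ upset L.le (A ⟨(x:ℕ) - n, by have := x.isLt; omega⟩) := by
  simp [extLe, hx, hy]

lemma extLe_nn {x y : Fin (n+m)} (hx : ¬ (x:ℕ) < n) (hy : ¬ (y:ℕ) < n) :
    extLe L.le A x y ↔ x = y := by simp [extLe, hx, hy]

/-- embedding -/
def e {n m : ℕ} (x : Fin n) : Fin (n+m) := ⟨x.val, by omega⟩

@[simp] lemma e_val (x : Fin n) : ((e x : Fin (n+m)) : ℕ) = x.val := rfl

lemma e_inj {x y : Fin n} (h : (e x : Fin (n+m)) = e y) : x = y := by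
  rw [Fin.ext_iff] at h ⊢; exact h

lemma extLe_e (x y : Fin n) : extLe L.le A (e x) (e y) ↔ L.le x y := by
  rw [extLe_oo L A x.isLt y.isLt]; simp [Fin.eta]

variable (hn : 2 ≤ n) (hm : 1 ≤ m)
variable (hb : Bounds L.le ⟨0, h0n hn⟩ ⟨1, h1n hn⟩)
variable (hB2 : ∀ i : Fin m, IsLatticeAntichain L ⟨0, h0n hn⟩ (A i))

lemma Ltr : ∀ x y w : Fin n, L.le x y → L.le y w → L.le x w :=
  fun x y w h h' => L.le_trans x y w h h'

lemma Las : ∀ x y : Fin n, L.le x y → L.le y x → x = y :=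
  fun x y h h' => L.le_antisymm x y h h'

include hn hb hB2 in
lemma upset_ne_z (i : Fin m) : ∀ x ∈ upset L.le (A i), x ≠ ⟨0, h0n hn⟩ := by
  rintro x ⟨a, ha, hax⟩ rfl
  exact (hB2 i).2.1 a ha (Las L a _ hax (hb.1 a))

include hn hb in
lemma R_bot_le (z' : Fin (n+m)) (hz' : (z':ℕ) = 0) : ∀ y, extLe L.le A z' y := by
  intro y
  have hz'' : (z':ℕ) < n := by omega
  by_cases hy : (y:ℕ) < n
  · rw [extLe_oo L A hz'' hy]
    have := hb.1 ⟨y, hy⟩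
    convert this using 2
  · rw [extLe_on L A hz'' hy]; exact hz'

include hn hb hB2 in
lemma R_bot_term (z' w : Fin (n+m)) (hz' : (z':ℕ) = 0) (h : extLe L.le A w z') : w = z' := by
  have hz'' : (z':ℕ) < n := by omega
  by_cases hw : (w:ℕ) < n
  · rw [extLe_oo L A hw hz''] at h
    have h2 : (⟨w, hw⟩ : Fin n) = ⟨z', hz''⟩ :=
      Las L _ _ h (by have := hb.1 ⟨w, hw⟩; convert this using 2)
    apply Fin.ext
    have := congrArg Fin.val h2
    simpa using this
  · rw [extLe_no L A hw hz''] at h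
    exact absurd h (by
      intro hmem
      exact upset_ne_z L A hn hb hB2 _ _ hmem (Fin.ext (by simp [hz'])))

include hn hb hB2 in
lemma R_le_top (t' : Fin (n+m)) (ht' : (t':ℕ) = 1) : ∀ y, extLe L.le A y t' := by
  intro y
  have ht'' : (t':ℕ) < n := by omega
  by_cases hy : (y:ℕ) < n
  · rw [extLe_oo L A hy ht'']
    have := hb.2 ⟨y, hy⟩
    convert this using 2
  · rw [extLe_no L A hy ht'']
    obtain ⟨a, ha⟩ := (hB2 _).1
    refine ⟨a, ha, ?_⟩
    rw [show (⟨(t':ℕ), ht''⟩ : Fin n) = ⟨1, by omega⟩ from Fin.ext ht']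
    exact hb.2 a

include hn hb hB2 in
lemma Rtr : ∀ x y w : Fin (n+m), extLe L.le A x y → extLe L.le A y w → extLe L.le A x w := by
  intro x y w hxy hyw
  by_cases hx : (x:ℕ) < n <;> by_cases hy : (y:ℕ) < n <;> by_cases hw : (w:ℕ) < n
  · rw [extLe_oo L A hx hy] at hxy; rw [extLe_oo L A hy hw] at hyw
    rw [extLe_oo L A hx hw]; exact Ltr L _ _ _ hxy hyw
  · rw [extLe_oo L A hx hy] at hxy; rw [extLe_on L A hy hw] at hyw
    rw [extLe_on L A hx hw]
    have : (⟨x, hx⟩ : Fin n) = ⟨y, hy⟩ := Las L _ _ hxy (by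
      have := hb.1 ⟨x, hx⟩; convert this using 2)
    have := congrArg Fin.val this; simp at this; omega
  · rw [extLe_on L A hx hy] at hxy
    exact R_bot_le L A hn hb x hxy w
  · rw [extLe_on L A hx hy] at hxy
    exact R_bot_le L A hn hb x hxy w
  · rw [extLe_no L A hx hy] at hxy; rw [extLe_oo L A hy hw] at hyw
    rw [extLe_no L A hx hw]
    obtain ⟨a, ha, hax⟩ := hxy
    exact ⟨a, ha, Ltr L _ _ _ hax hyw⟩
  · rw [extLe_no L A hx hy] at hxy; rw [extLe_on L A hy hw] at hyw
    exfalso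
    exact upset_ne_z L A hn hb hB2 _ _ hxy (Fin.ext (by simp [hyw]))
  · rw [extLe_nn L A hx hy] at hxy; subst hxy
    exact hyw
  · rw [extLe_nn L A hx hy] at hxy; subst hxy
    exact hyw

include hn hb hB2 in
lemma Ras : ∀ x y : Fin (n+m), extLe L.le A x y → extLe L.le A y x → x = y := by
  intro x y hxy hyx
  by_cases hx : (x:ℕ) < n <;> by_cases hy : (y:ℕ) < n
  · rw [extLe_oo L A hx hy] at hxy; rw [extLe_oo L A hy hx] at hyx
    have := congrArg Fin.val (Las L _ _ hxy hyx); exact Fin.ext (by simpa using this)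
  · rw [extLe_on L A hx hy] at hxy
    exact absurd (R_bot_term L A hn hb hB2 x y (by omega) hyx).symm
      (by intro h; have := congrArg Fin.val h; omega)
  · rw [extLe_on L A hy hx] at hyx
    exact R_bot_term L A hn hb hB2 y x (by omega) hxy
  · rw [extLe_nn L A hx hy] at hxy; exact hxy

include hn hb hB2 in
lemma chain_all_old (a : Fin n) (ha : (a:ℕ) ≠ 0) :
    ∀ l : List (Fin (n+m)), List.Chain' (fun x y => extLe L.le A y x ∧ y ≠ x) l →
    l.getLast? = some (e a) → ∀ x ∈ l, (x:ℕ) < n := by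
  intro l
  induction l with
  | nil => intro _ _ x hx; simp at hx
  | cons x rest ih =>
    intro hc hlast q hq
    cases rest with
    | nil =>
      simp only [List.getLast?_singleton, Option.some.injEq] at hlast
      simp only [List.mem_singleton] at hq
      subst hlast; subst hq; exact a.isLt
    | cons y rest2 =>
      have hxy := (List.isChain_cons_cons.mp hc).1
      have hc' := (List.isChain_cons_cons.mp hc).2
      have hlast' : (y :: rest2).getLast? = some (e a) := by
        rwa [List.getLast?_cons_cons] at hlast
      have hall := ih hc' hlast'
      have hy : (y:ℕ) < n := hall y (by simp)
      rcases List.mem_cons.mp hq with rfl | hq'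
      · by_contra hx
        have h0 : (y:ℕ) = 0 := (extLe_on L A hy hx).mp hxy.1
        cases rest2 with
        | nil =>
          simp only [List.getLast?_singleton, Option.some.injEq] at hlast'
          subst hlast'
          exact ha (by simpa using h0)
        | cons w rest3 =>
          have hyw := (List.isChain_cons_cons.mp hc').1
          exact hyw.2 (R_bot_term L A hn hb hB2 y w h0 hyw.1)
      · exact hall q hq'

lemma list_old_map : ∀ l : List (Fin (n+m)), (∀ x ∈ l, (x:ℕ) < n) →
    ∃ l0 : List (Fin n), l = l0.map e := by
  intro l
  induction l with
  | nil => exact fun _ => ⟨[], rfl⟩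
  | cons x rest ih =>
    intro h
    obtain ⟨l0, hl0⟩ := ih (fun q hq => h q (by simp [hq]))
    refine ⟨⟨(x:ℕ), h x (by simp)⟩ :: l0, ?_⟩
    rw [List.map_cons, ← hl0]
    congr 1

lemma cset_map (t a : Fin n) (j : ℕ) (hj : j ∈ cset L.le t a) :
    j ∈ cset (extLe L.le A) (e t) (e a) := by
  obtain ⟨l, hc, hh, hl, hlen⟩ := hj
  refine ⟨l.map e, ?_, ?_, ?_, by simp [hlen]⟩
  · rw [List.Chain', List.isChain_map]
    exact hc.imp (fun x y h => ⟨(extLe_e L A _ _).mpr h.1, fun hh => h.2 (e_inj hh)⟩)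
  · rw [List.head?_map, hh]; rfl
  · rw [List.getLast?_map, hl]; rfl

include hn hb hB2 in
lemma cset_unmap (t a : Fin n) (ha : (a:ℕ) ≠ 0) (j : ℕ)
    (hj : j ∈ cset (extLe L.le A) (e t) (e a)) : j ∈ cset L.le t a := by
  obtain ⟨l, hc, hh, hl, hlen⟩ := hj
  obtain ⟨l0, rfl⟩ := list_old_map l (chain_all_old L A hn hb hB2 a ha l hc hl)
  refine ⟨l0, ?_, ?_, ?_, by simpa using hlen⟩
  · rw [List.Chain', List.isChain_map] at hc
    exact hc.imp (fun x y h => ⟨(extLe_e L A _ _).mp h.1, fun hh => h.2 (congrArg e hh)⟩)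
  · rw [List.head?_map] at hh
    cases h0 : l0.head? with
    | none => rw [h0] at hh; simp at hh
    | some u =>
      rw [h0] at hh; simp only [Option.map_some, Option.some.injEq] at hh
      rw [e_inj hh]
  · rw [List.getLast?_map] at hl
    cases h0 : l0.getLast? with
    | none => rw [h0] at hl; simp at hl
    | some u =>
      rw [h0] at hl; simp only [Option.map_some, Option.some.injEq] at hl
      rw [e_inj hl]

include hn hb hB2 in
lemma cset_ext_eq (t a : Fin n) (ha : (a:ℕ) ≠ 0) :
    cset (extLe L.le A) (e t) (e a) = cset L.le t a :=
  Set.ext fun j => ⟨cset_unmap L A hn hb hB2 t a ha j, cset_map L A t a j⟩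

include hn hb hB2 in
lemma dep_ext_old (t a : Fin n) (ha : (a:ℕ) ≠ 0) :
    dep (extLe L.le A) (e t) (e a) = dep L.le t a := by
  rw [dep_eq, dep_eq, cset_ext_eq L A hn hb hB2 t a ha]

include hn hb hB2 in
lemma dep_ext_old' (a : Fin n) (ha0 : (a:ℕ) ≠ 0) :
    dep (extLe L.le A) ⟨1, h1nm hn⟩ (e a) = dep L.le ⟨1, h1n hn⟩ a :=
  dep_ext_old L A hn hb hB2 ⟨1, h1n hn⟩ a ha0

variable (hlev : Levellised L.le ⟨1, h1n hn⟩) (k : ℕ)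
variable (hk : dep L.le ⟨1, h1n hn⟩ ⟨n - 1, hn1n hn⟩ = k)
variable (hB1 : ∀ i : Fin m, (A i ∩ lev L.le ⟨1, h1n hn⟩ k).Nonempty)

include hn hlev hk in
lemma NZB (a : Fin n) (ha : a ≠ ⟨0, h0n hn⟩) : dep L.le ⟨1, h1n hn⟩ a ≤ k := by
  have ha' : 0 < (a:ℕ) := by
    rcases Nat.eq_zero_or_pos (a:ℕ) with h | h
    · exact absurd (Fin.ext h) ha
    · exact h
  have h2 := hlev a ⟨n - 1, by omega⟩ ha' (by show (a:ℕ) ≤ n - 1; have := a.isLt; omega)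
  rwa [hk] at h2

include hn hb in
lemma cset_L_ne (a : Fin n) : (cset L.le ⟨1, h1n hn⟩ a).Nonempty :=
  cset_nonempty_of_top (hb.2 a)

include hn hb in
lemma dep_L_mem (a : Fin n) :
    dep L.le ⟨1, h1n hn⟩ a ∈ cset L.le ⟨1, h1n hn⟩ a := by
  rw [dep_eq]
  exact cset_mem_sSup (Ltr L) (Las L) (cset_L_ne L hn hb a)

include hn hb in
lemma dep_L_strict (a b : Fin n) (hab : L.le a b) (hne : a ≠ b) :
    dep L.le ⟨1, h1n hn⟩ b + 1 ≤ dep L.le ⟨1, h1n hn⟩ a := by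
  have h1 := cset_append (dep_L_mem L hn hb b) hab hne
  rw [dep_eq L.le ⟨1, h1n hn⟩ a]
  exact le_csSup (cset_bdd (Ltr L) (Las L) _ _) h1

include hn hm hb hlev hk hB1 hB2 in
lemma dep_z : dep L.le ⟨1, h1n hn⟩ ⟨0, h0n hn⟩ = k + 1 := by
  obtain ⟨x, hxA, hxl⟩ := hB1 ⟨0, hm⟩
  have hxz : x ≠ ⟨0, h0n hn⟩ := (hB2 ⟨0, hm⟩).2.1 x hxA
  apply le_antisymm
  · rw [dep_eq]
    apply csSup_le (cset_L_ne L hn hb _)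
    intro j hj
    cases j with
    | zero => omega
    | succ j' =>
      obtain ⟨b, hab, hne, hj'⟩ := cset_drop hj
      have hbz : b ≠ ⟨0, h0n hn⟩ := fun h => hne (by rw [h])
      have h1 : j' ≤ dep L.le ⟨1, h1n hn⟩ b := by
        rw [dep_eq]
        exact le_csSup (cset_bdd (Ltr L) (Las L) _ _) hj'
      have h2 := NZB L hn hlev k hk b hbz
      omega
  · have h1 : dep L.le ⟨1, h1n hn⟩ x = k := hxl
    have := dep_L_strict L hn hb ⟨0, h0n hn⟩ x (hb.1 x) (Ne.symm hxz)
    omega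

include hn hb hlev k hk hB1 hB2 in
lemma atom_mem (c : Fin (n+m)) (hc : ¬ (c:ℕ) < n) :
    k + 1 ∈ cset (extLe L.le A) ⟨1, h1nm hn⟩ c := by
  obtain ⟨x, hxA, hxl⟩ := hB1 ⟨(c:ℕ) - n, by have := c.isLt; omega⟩
  have hxz : (x:ℕ) ≠ 0 := fun h =>
    (hB2 _).2.1 x hxA (Fin.ext h)
  have hmem : k ∈ cset (extLe L.le A) (e ⟨1, h1n hn⟩) (e x) := by
    rw [cset_ext_eq L A hn hb hB2 ⟨1, h1n hn⟩ x hxz]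
    have h1 : dep L.le ⟨1, h1n hn⟩ x = k := hxl
    rw [← h1]
    exact dep_L_mem L hn hb x
  have hex : ((e x : Fin (n+m)) : ℕ) < n := x.isLt
  have step : extLe L.le A c (e x) := by
    rw [extLe_no L A hc hex]
    refine ⟨x, hxA, ?_⟩
    rw [show (⟨((e x : Fin (n+m)) : ℕ), hex⟩ : Fin n) = x from Fin.ext rfl]
    exact L.le_refl x
  have hne : c ≠ e x := by
    intro h
    have := congrArg Fin.val h
    simp only [e_val] at this
    have := x.isLt
    omega
  exact cset_append hmem step hne

include hn hb hlev k hk hB1 hB2 in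
lemma dep_atom (c : Fin (n+m)) (hc : ¬ (c:ℕ) < n) :
    dep (extLe L.le A) ⟨1, h1nm hn⟩ c = k + 1 := by
  have hmem := atom_mem L A hn hb hB2 hlev k hk hB1 c hc
  apply le_antisymm
  · rw [dep_eq]
    apply csSup_le ⟨k + 1, hmem⟩
    intro j hj
    cases j with
    | zero => omega
    | succ j' =>
      obtain ⟨b, hcb, hne, hj'⟩ := cset_drop hj
      by_cases hbn : (b:ℕ) < n
      · have hub := (extLe_no L A hc hbn).mp hcb
        have hbz : (⟨(b:ℕ), hbn⟩ : Fin n) ≠ ⟨0, h0n hn⟩ :=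
          upset_ne_z L A hn hb hB2 _ _ hub
        have hbz' : ((⟨(b:ℕ), hbn⟩ : Fin n) : ℕ) ≠ 0 := fun h => hbz (Fin.ext h)
        have hb' : b = e (⟨(b:ℕ), hbn⟩ : Fin n) := Fin.ext rfl
        rw [hb'] at hj'
        have hj'' := cset_unmap L A hn hb hB2 ⟨1, h1n hn⟩ _ hbz' j' hj'
        have h1 : j' ≤ dep L.le ⟨1, h1n hn⟩ ⟨(b:ℕ), hbn⟩ := by
          rw [dep_eq]
          exact le_csSup (cset_bdd (Ltr L) (Las L) _ _) hj''
        have h2 := NZB L hn hlev k hk _ hbz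
        omega
      · rw [extLe_nn L A hc hbn] at hcb
        exact absurd hcb hne
  · rw [dep_eq]
    exact le_csSup (cset_bdd (Rtr L A hn hb hB2) (Ras L A hn hb hB2) _ _) hmem

include hn hm hb hlev k hk hB1 hB2 in
lemma dep_zext : dep (extLe L.le A) ⟨1, h1nm hn⟩ ⟨0, h0nm hn⟩ = k + 2 := by
  have hc0 : ¬ ((⟨n, hnnm hm⟩ : Fin (n+m)) : ℕ) < n := Nat.lt_irrefl n
  have hmem := atom_mem L A hn hb hB2 hlev k hk hB1 ⟨n, hnnm hm⟩ hc0
  have hstep : extLe L.le A ⟨0, h0nm hn⟩ ⟨n, hnnm hm⟩ :=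
    R_bot_le L A hn hb ⟨0, h0nm hn⟩ rfl _
  have hne : (⟨0, h0nm hn⟩ : Fin (n+m)) ≠ ⟨n, hnnm hm⟩ := by
    intro h; have := congrArg Fin.val h; simp at this; omega
  have hmem2 := cset_append hmem hstep hne
  apply le_antisymm
  · rw [dep_eq]
    apply csSup_le ⟨k + 2, hmem2⟩
    intro j hj
    cases j with
    | zero => omega
    | succ j' =>
      obtain ⟨b, hzb, hne', hj'⟩ := cset_drop hj
      by_cases hbn : (b:ℕ) < n
      · by_cases hb0 : (b:ℕ) = 0
        · exact absurd (Fin.ext hb0.symm : (⟨0, h0nm hn⟩ : Fin (n+m)) = b)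
            (fun h => hne' h)
        · have hb' : b = e (⟨(b:ℕ), hbn⟩ : Fin n) := Fin.ext rfl
          rw [hb'] at hj'
          have hj'' := cset_unmap L A hn hb hB2 ⟨1, h1n hn⟩ _ hb0 j' hj'
          have h1 : j' ≤ dep L.le ⟨1, h1n hn⟩ ⟨(b:ℕ), hbn⟩ := by
            rw [dep_eq]
            exact le_csSup (cset_bdd (Ltr L) (Las L) _ _) hj''
          have h2 := NZB L hn hlev k hk ⟨(b:ℕ), hbn⟩ (fun h => hb0 (congrArg Fin.val h))
          omega
      · have h1 : j' ≤ dep (extLe L.le A) ⟨1, by omega⟩ b := by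
          rw [dep_eq]
          exact le_csSup (cset_bdd (Rtr L A hn hb hB2) (Ras L A hn hb hB2) _ _) hj'
        have h2 := dep_atom L A hn hb hB2 hlev k hk hB1 b hbn
        omega
  · rw [dep_eq]
    exact le_csSup (cset_bdd (Rtr L A hn hb hB2) (Ras L A hn hb hB2) _ _) hmem2

lemma extLe_oe (a : Fin (n+m)) (ha : (a:ℕ) < n) (x : Fin n) :
    extLe L.le A a (e x) ↔ L.le ⟨a, ha⟩ x := by
  rw [extLe_oo L A ha (x.isLt : ((e x : Fin (n+m)) : ℕ) < n)]
  rw [show (⟨((e x : Fin (n+m)) : ℕ), x.isLt⟩ : Fin n) = x from Fin.ext rfl]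

lemma extLe_eo (x : Fin n) (b : Fin (n+m)) (hbn : (b:ℕ) < n) :
    extLe L.le A (e x) b ↔ L.le x ⟨b, hbn⟩ := by
  rw [extLe_oo L A (x.isLt : ((e x : Fin (n+m)) : ℕ) < n) hbn]
  rw [show (⟨((e x : Fin (n+m)) : ℕ), x.isLt⟩ : Fin n) = x from Fin.ext rfl]

lemma cov_restrict (a b : Fin (n+m)) (ha : (a:ℕ) < n) (ha0 : (a:ℕ) ≠ 0) (hbn : (b:ℕ) < n) :
    CovByRel (extLe L.le A) a b ↔ CovByRel L.le ⟨a, ha⟩ ⟨b, hbn⟩ := by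
  constructor
  · rintro ⟨⟨hle, hne⟩, hmin⟩
    refine ⟨⟨(extLe_oo L A ha hbn).mp hle, fun h => hne (by rw [Fin.ext_iff] at h ⊢; exact h)⟩, ?_⟩
    rintro x ⟨hx1, hx2⟩ ⟨hx3, hx4⟩
    exact hmin (e x) ⟨(extLe_oe L A a ha x).mpr hx1, fun h => hx2 (by rw [Fin.ext_iff] at h ⊢; exact h)⟩
      ⟨(extLe_eo L A x b hbn).mpr hx3, fun h => hx4 (by rw [Fin.ext_iff] at h ⊢; exact h)⟩
  · rintro ⟨⟨hle, hne⟩, hmin⟩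
    refine ⟨⟨(extLe_oo L A ha hbn).mpr hle, fun h => hne (by rw [Fin.ext_iff] at h ⊢; exact h)⟩, ?_⟩
    rintro x ⟨hx1, hx2⟩ ⟨hx3, hx4⟩
    by_cases hxn : (x:ℕ) < n
    · exact hmin ⟨(x:ℕ), hxn⟩ ⟨(extLe_oo L A ha hxn).mp hx1, fun h => hx2 (by rw [Fin.ext_iff] at h ⊢; exact h)⟩
        ⟨(extLe_oo L A hxn hbn).mp hx3, fun h => hx4 (by rw [Fin.ext_iff] at h ⊢; exact h)⟩
    · exact ha0 ((extLe_on L A ha hxn).mp hx1)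

include hn hb hB2 in
lemma cov_z_ext (b : Fin n) (hbz : b ≠ ⟨0, h0n hn⟩)
    (hcov : CovByRel L.le ⟨0, h0n hn⟩ b) (hnup : ∀ i, b ∉ upset L.le (A i)) :
    CovByRel (extLe L.le A) ⟨0, h0nm hn⟩ (e b) := by
  refine ⟨⟨R_bot_le L A hn hb _ rfl _, fun h => hbz (by rw [Fin.ext_iff] at h ⊢; exact h.symm)⟩, ?_⟩
  rintro x ⟨hx1, hx2⟩ ⟨hx3, hx4⟩
  by_cases hxn : (x:ℕ) < n
  · refine hcov.2 ⟨(x:ℕ), hxn⟩ ⟨?_, fun h => hx2 (by rw [Fin.ext_iff] at h ⊢; exact h)⟩ ⟨?_, fun h => hx4 (by rw [Fin.ext_iff] at h ⊢; exact h)⟩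
    · exact (extLe_oo L A (h0n hn) hxn).mp hx1
    · exact (extLe_eo L A _ _ _).mp (by rwa [show e (⟨(x:ℕ), hxn⟩ : Fin n) = x from Fin.ext rfl])
  · have hup := (extLe_no L A hxn (b.isLt : ((e b : Fin (n+m)) : ℕ) < n)).mp hx3
    rw [show (⟨((e b : Fin (n+m)) : ℕ), _⟩ : Fin n) = b from Fin.ext rfl] at hup
    exact hnup _ hup

include hn hb hB2 in
lemma cov_z_ext_inv (b : Fin n) (hcov : CovByRel (extLe L.le A) ⟨0, h0nm hn⟩ (e b)) :
    CovByRel L.le ⟨0, h0n hn⟩ b ∧ ∀ i, b ∉ upset L.le (A i) := by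
  obtain ⟨⟨hle, hne⟩, hmin⟩ := hcov
  constructor
  · refine ⟨⟨?_, fun h => hne (by rw [← h]; exact Fin.ext rfl)⟩, ?_⟩
    · exact hb.1 b
    · rintro c ⟨hc1, hc2⟩ ⟨hc3, hc4⟩
      exact hmin (e c) ⟨R_bot_le L A hn hb _ rfl _, fun h => hc2 (by rw [Fin.ext_iff] at h ⊢; exact h)⟩
        ⟨(extLe_e L A c b).mpr hc3, fun h => hc4 (e_inj h)⟩
  · intro i hup
    have hcn : ¬ ((⟨n + (i:ℕ), by have := i.isLt; omega⟩ : Fin (n+m)) : ℕ) < n := by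
      show ¬ n + (i:ℕ) < n; omega
    refine hmin ⟨n + (i:ℕ), by have := i.isLt; omega⟩
      ⟨R_bot_le L A hn hb _ rfl _, fun h => ?_⟩
      ⟨?_, fun h => ?_⟩
    · have := congrArg Fin.val h; simp at this; omega
    · rw [extLe_no L A hcn (b.isLt : ((e b : Fin (n+m)) : ℕ) < n)]
      rw [show (⟨((e b : Fin (n+m)) : ℕ), _⟩ : Fin n) = b from Fin.ext rfl]
      rwa [show (⟨((⟨n + (i:ℕ), by have := i.isLt; omega⟩ : Fin (n+m)) : ℕ) - n,
        by show n + (i:ℕ) - n < m; have := i.isLt; omega⟩ : Fin m) = i from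
        Fin.ext (by show n + (i:ℕ) - n = (i:ℕ); omega)]
    · have := congrArg Fin.val h; simp at this
      have := b.isLt; omega

include hn hb hB2 in
lemma cov_atom (i : Fin m) (c : Fin (n+m)) (hcv : (c:ℕ) = n + (i:ℕ)) (b : Fin n)
    (hbA : b ∈ A i) : CovByRel (extLe L.le A) c (e b) := by
  have hcn : ¬ (c:ℕ) < n := by omega
  have hidx : (⟨(c:ℕ) - n, by have := c.isLt; omega⟩ : Fin m) = i :=
    Fin.ext (by show (c:ℕ) - n = (i:ℕ); omega)
  refine ⟨⟨?_, fun h => ?_⟩, ?_⟩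
  · rw [extLe_no L A hcn (b.isLt : ((e b : Fin (n+m)) : ℕ) < n)]
    rw [show (⟨((e b : Fin (n+m)) : ℕ), _⟩ : Fin n) = b from Fin.ext rfl, hidx]
    exact ⟨b, hbA, L.le_refl b⟩
  · have := congrArg Fin.val h; simp at this
    have := b.isLt; omega
  · rintro x ⟨hx1, hx2⟩ ⟨hx3, hx4⟩
    by_cases hxn : (x:ℕ) < n
    · have hup := (extLe_no L A hcn hxn).mp hx1
      rw [hidx] at hup
      obtain ⟨a', ha', hax⟩ := hup
      have hxb : L.le ⟨(x:ℕ), hxn⟩ b := by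
        have := (extLe_eo L A ⟨(x:ℕ), hxn⟩ (e b) (b.isLt : ((e b : Fin (n+m)) : ℕ) < n)).mp
          (by rwa [show e (⟨(x:ℕ), hxn⟩ : Fin n) = x from Fin.ext rfl])
        rwa [show (⟨((e b : Fin (n+m)) : ℕ), _⟩ : Fin n) = b from Fin.ext rfl] at this
      by_cases hab : a' = b
      · subst hab
        have : (⟨(x:ℕ), hxn⟩ : Fin n) = a' := Las L _ _ hxb hax
        exact hx4 (by rw [← this]; exact (Fin.ext rfl : x = e (⟨(x:ℕ), hxn⟩ : Fin n)).symm)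
      · exact (hB2 i).2.2.1 a' ha' b hbA hab (Ltr L _ _ _ hax hxb)
    · rw [extLe_nn L A hcn hxn] at hx1
      exact hx2 hx1

include hn hb hB2 in
lemma cov_atom_inv (c : Fin (n+m)) (hcn : ¬ (c:ℕ) < n) (x : Fin (n+m))
    (hcov : CovByRel (extLe L.le A) c x) :
    ∃ hx : (x:ℕ) < n, (⟨(x:ℕ), hx⟩ : Fin n) ∈ A ⟨(c:ℕ) - n, hsubm hcn⟩ := by
  obtain ⟨⟨hle, hne⟩, hmin⟩ := hcov
  by_cases hxn : (x:ℕ) < n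
  · refine ⟨hxn, ?_⟩
    have hup := (extLe_no L A hcn hxn).mp hle
    obtain ⟨a', ha', hax⟩ := hup
    by_cases hax' : a' = ⟨(x:ℕ), hxn⟩
    · rwa [← hax']
    · exfalso
      refine hmin (e a') ⟨?_, fun h => ?_⟩ ⟨?_, fun h => hax' (by rw [Fin.ext_iff] at h ⊢; exact h)⟩
      · rw [extLe_no L A hcn (a'.isLt : ((e a' : Fin (n+m)) : ℕ) < n)]
        rw [show (⟨((e a' : Fin (n+m)) : ℕ), _⟩ : Fin n) = a' from Fin.ext rfl]
        exact ⟨a', ha', L.le_refl a'⟩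
      · have := congrArg Fin.val h; simp at this
        have := a'.isLt; omega
      · exact (extLe_eo L A a' x hxn).mpr hax
  · rw [extLe_nn L A hcn hxn] at hle
    exact absurd hle hne

include hn hb hB2 in
lemma cov_z_atom (c : Fin (n+m)) (hcn : ¬ (c:ℕ) < n) :
    CovByRel (extLe L.le A) ⟨0, h0nm hn⟩ c := by
  refine ⟨⟨R_bot_le L A hn hb _ rfl _, fun h => ?_⟩, ?_⟩
  · have := congrArg Fin.val h; simp at this; omega
  · rintro x ⟨hx1, hx2⟩ ⟨hx3, hx4⟩
    by_cases hxn : (x:ℕ) < n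
    · have h0 := (extLe_on L A hxn hcn).mp hx3
      exact hx2 (Fin.ext h0.symm)
    · rw [extLe_nn L A hxn hcn] at hx3
      exact hx4 hx3

include hn hb hB2 in
lemma mem_A_of_cov (b : Fin n) (hcov : CovByRel L.le ⟨0, h0n hn⟩ b) (i : Fin m)
    (hup : b ∈ upset L.le (A i)) : b ∈ A i := by
  obtain ⟨a', ha', hab⟩ := hup
  by_cases h : a' = b
  · rwa [← h]
  · exact absurd (hcov.2 a' ⟨hb.1 a', Ne.symm ((hB2 i).2.1 a' ha')⟩ ⟨hab, h⟩) not_false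

include hn hb hlev k hk in
lemma cov_of_lev (b : Fin n) (hbz : b ≠ ⟨0, h0n hn⟩)
    (hdep : dep L.le ⟨1, h1n hn⟩ b = k) : CovByRel L.le ⟨0, h0n hn⟩ b := by
  refine ⟨⟨hb.1 b, Ne.symm hbz⟩, ?_⟩
  rintro c ⟨hc1, hc2⟩ ⟨hc3, hc4⟩
  have h1 := dep_L_strict L hn hb c b hc3 hc4
  have h2 := NZB L hn hlev k hk c (Ne.symm hc2)
  omega

end Spec

/-- the extension by new atoms is graded iff `L` is graded and the union of
the covering sets of the new atoms is the `k`-th level of `L`. -/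
theorem statement12 {n m : ℕ} (hn : 2 ≤ n) (hm : 1 ≤ m) (L : Lattice (Fin n))
    (hb : Bounds L.le ⟨0, by omega⟩ ⟨1, by omega⟩)
    (hlev : Levellised L.le ⟨1, by omega⟩)
    (k : ℕ) (hk : dep L.le ⟨1, by omega⟩ ⟨n - 1, by omega⟩ = k)
    (A : Fin m → Set (Fin n))
    (hB1 : ∀ i : Fin m, (A i ∩ lev L.le ⟨1, by omega⟩ k).Nonempty)
    (hB2 : ∀ i : Fin m, IsLatticeAntichain L ⟨0, by omega⟩ (A i))
    (hB3 : ∀ i j : Fin m, i ≠ j → ∀ a b : Fin n,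
      a ∈ upset L.le (A i) ∩ upset L.le (A j) →
      b ∈ upset L.le (A i) ∩ upset L.le (A j) →
      L.inf a b ≠ ⟨0, by omega⟩) :
    (∀ a b : Fin (n + m), CovByRel (extLe L.le A) a b →
        dep (extLe L.le A) ⟨1, by omega⟩ a = dep (extLe L.le A) ⟨1, by omega⟩ b + 1) ↔
      ((∀ a b : Fin n, CovByRel L.le a b →
          dep L.le ⟨1, by omega⟩ a = dep L.le ⟨1, by omega⟩ b + 1) ∧
        (⋃ i : Fin m, A i) = lev L.le ⟨1, by omega⟩ k) := by
  have hb' : Bounds L.le ⟨0, h0n hn⟩ ⟨1, h1n hn⟩ := hb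
  have hlev' : Levellised L.le ⟨1, h1n hn⟩ := hlev
  have hk' : dep L.le ⟨1, h1n hn⟩ ⟨n - 1, hn1n hn⟩ = k := hk
  have hB1' : ∀ i : Fin m, (A i ∩ lev L.le ⟨1, h1n hn⟩ k).Nonempty := hB1
  have hB2' : ∀ i : Fin m, IsLatticeAntichain L ⟨0, h0n hn⟩ (A i) := hB2
  constructor
  · intro hgr
    have memA : ∀ b : Fin n, b ≠ ⟨0, h0n hn⟩ → CovByRel L.le ⟨0, h0n hn⟩ b →
        ∃ i, b ∈ A i := by
      intro b hbz hcov
      have hb0 : (b:ℕ) ≠ 0 := fun h => hbz (Fin.ext h)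
      have hup : ∃ i, b ∈ upset L.le (A i) := by
        by_contra hno
        push_neg at hno
        have hc2 := cov_z_ext L A hn hb' hB2' b hbz hcov hno
        have h3 := hgr _ _ hc2
        rw [dep_zext L A hn hm hb' hB2' hlev' k hk' hB1'] at h3
        rw [dep_ext_old' L A hn hb' hB2' b hb0] at h3
        have h4 := NZB L hn hlev' k hk' b hbz
        omega
      obtain ⟨i, hup⟩ := hup
      exact ⟨i, mem_A_of_cov L A hn hb' hB2' b hcov i hup⟩
    constructor
    · intro a b hcov
      by_cases haz : a = ⟨0, h0n hn⟩
      · subst haz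
        have hbz : b ≠ ⟨0, h0n hn⟩ := Ne.symm hcov.1.2
        have hb0 : (b:ℕ) ≠ 0 := fun h => hbz (Fin.ext h)
        obtain ⟨i, hbA⟩ := memA b hbz hcov
        have hca := cov_atom L A hn hb' hB2' i ⟨n + (i:ℕ), by have := i.isLt; omega⟩
          rfl b hbA
        have h2 := hgr _ _ hca
        rw [dep_atom L A hn hb' hB2' hlev' k hk' hB1' _ (by show ¬ n + (i:ℕ) < n; omega)] at h2
        rw [dep_ext_old' L A hn hb' hB2' b hb0] at h2
        rw [dep_z L A hn hm hb' hB2' hlev' k hk' hB1']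
        omega
      · have hbz : b ≠ ⟨0, h0n hn⟩ := by
          intro h; rw [h] at hcov
          exact haz (Las L _ _ hcov.1.1 (hb'.1 a))
        have ha0 : (a:ℕ) ≠ 0 := fun h => haz (Fin.ext h)
        have hb0 : (b:ℕ) ≠ 0 := fun h => hbz (Fin.ext h)
        have hcove : CovByRel (extLe L.le A) (e a) (e b) := by
          rw [cov_restrict L A (e a) (e b) a.isLt ha0 b.isLt]
          rw [show (⟨((e a : Fin (n+m)) : ℕ), a.isLt⟩ : Fin n) = a from Fin.ext rfl]
          rw [show (⟨((e b : Fin (n+m)) : ℕ), b.isLt⟩ : Fin n) = b from Fin.ext rfl]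
          exact hcov
        have h2 := hgr _ _ hcove
        rwa [dep_ext_old' L A hn hb' hB2' a ha0,
          dep_ext_old' L A hn hb' hB2' b hb0] at h2
    · apply Set.Subset.antisymm
      · intro x hx
        obtain ⟨i, hxA⟩ := Set.mem_iUnion.mp hx
        have hxz : x ≠ ⟨0, h0n hn⟩ := (hB2' i).2.1 x hxA
        have hx0 : (x:ℕ) ≠ 0 := fun h => hxz (Fin.ext h)
        have hca := cov_atom L A hn hb' hB2' i ⟨n + (i:ℕ), by have := i.isLt; omega⟩
          rfl x hxA
        have h2 := hgr _ _ hca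
        rw [dep_atom L A hn hb' hB2' hlev' k hk' hB1' _ (by show ¬ n + (i:ℕ) < n; omega)] at h2
        rw [dep_ext_old' L A hn hb' hB2' x hx0] at h2
        show dep L.le _ x = k
        omega
      · intro b hbl
        have hdep : dep L.le ⟨1, h1n hn⟩ b = k := hbl
        have hbz : b ≠ ⟨0, h0n hn⟩ := by
          intro h; rw [h] at hdep
          rw [dep_z L A hn hm hb' hB2' hlev' k hk' hB1'] at hdep
          omega
        have hcov := cov_of_lev L hn hb' hlev' k hk' b hbz hdep
        obtain ⟨i, hbA⟩ := memA b hbz hcov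
        exact Set.mem_iUnion.mpr ⟨i, hbA⟩
  · rintro ⟨hgrL, hU⟩ a b hcov
    by_cases han : (a:ℕ) < n
    · by_cases ha0 : (a:ℕ) = 0
      · have ha' : a = ⟨0, h0nm hn⟩ := Fin.ext ha0
        rw [ha'] at hcov ⊢
        by_cases hbn : (b:ℕ) < n
        · exfalso
          have hbe : b = e (⟨(b:ℕ), hbn⟩ : Fin n) := Fin.ext rfl
          rw [hbe] at hcov
          obtain ⟨hcz, hnup⟩ := cov_z_ext_inv L A hn hb' hB2' _ hcov
          have h2 := hgrL _ _ hcz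
          rw [dep_z L A hn hm hb' hB2' hlev' k hk' hB1'] at h2
          have hbl : (⟨(b:ℕ), hbn⟩ : Fin n) ∈ lev L.le ⟨1, h1n hn⟩ k := by
            show dep L.le _ _ = k; omega
          rw [← hU] at hbl
          obtain ⟨i, hbA⟩ := Set.mem_iUnion.mp hbl
          exact hnup i ⟨_, hbA, L.le_refl _⟩
        · rw [dep_zext L A hn hm hb' hB2' hlev' k hk' hB1',
            dep_atom L A hn hb' hB2' hlev' k hk' hB1' b hbn]
      · by_cases hbn : (b:ℕ) < n
        · have hb0 : (b:ℕ) ≠ 0 := by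
            intro h
            have hb'' : b = ⟨0, h0nm hn⟩ := Fin.ext h
            rw [hb''] at hcov
            exact ha0 (congrArg Fin.val
              (R_bot_term L A hn hb' hB2' ⟨0, h0nm hn⟩ a rfl hcov.1.1))
          have hcovL := (cov_restrict L A a b han ha0 hbn).mp hcov
          have h2 := hgrL _ _ hcovL
          rw [show a = e (⟨(a:ℕ), han⟩ : Fin n) from Fin.ext rfl,
            show b = e (⟨(b:ℕ), hbn⟩ : Fin n) from Fin.ext rfl]
          rw [dep_ext_old' L A hn hb' hB2' _ ha0,
            dep_ext_old' L A hn hb' hB2' _ hb0]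
          exact h2
        · exact absurd ((extLe_on L A han hbn).mp hcov.1.1) ha0
    · obtain ⟨hbn, hbA⟩ := cov_atom_inv L A hn hb' hB2' a han b hcov
      have hb0 : (b:ℕ) ≠ 0 := fun h => (hB2' _).2.1 _ hbA (Fin.ext h)
      have hbl : (⟨(b:ℕ), hbn⟩ : Fin n) ∈ lev L.le ⟨1, h1n hn⟩ k := by
        rw [← hU]; exact Set.mem_iUnion.mpr ⟨_, hbA⟩
      have hdep : dep L.le ⟨1, h1n hn⟩ ⟨(b:ℕ), hbn⟩ = k := hbl
      rw [dep_atom L A hn hb' hB2' hlev' k hk' hB1' a han]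
      rw [show b = e (⟨(b:ℕ), hbn⟩ : Fin n) from Fin.ext rfl]
      rw [dep_ext_old' L A hn hb' hB2' _ hb0]
      omega


end PaperLattice
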